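/- Let Q be a compact metric space and ℋ = (H_x)_{x∈Q} a family of affine subspaces H_x ⊆ ℝ^r (the empty set and ℝ^r allowed). Define the Glaeser refinement ℋ' = (H'_x) by H'_x = {λ ∈ H_x : dist(λ, H_y) → 0 as y → x in Q}. Then ℋ' is a subbundle of ℋ (H'_x ⊆ H_x for all x), and ℋ and ℋ' have the same sections, where a section is a continuous map f : Q → ℝ^r with f(x) ∈ H_x for all x. -/

import Mathlib

open Filter Topology

/-- The Glaeser refinement of a bundle of fibers `H x ⊆ ℝ^r`:
`H' x` consists of the `v ∈ H x` with `dist(v, H y) → 0` as `y → x`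
(using the extended infimal distance, so that `dist(v, ∅) = +∞`). -/
def glaeserRef {Q : Type*} [MetricSpace Q] {r : ℕ}
    (H : Q → Set (EuclideanSpace ℝ (Fin r))) : Q → Set (EuclideanSpace ℝ (Fin r)) :=
  fun x => {v ∈ H x | Tendsto (fun y => EMetric.infEdist v (H y)) (𝓝 x) (𝓝 0)}

/-- The Glaeser refinement of a bundle of affine subspaces is a subbundle and has
the same (continuous) sections as the original bundle. -/
theorem statement6 (Q : Type*) [MetricSpace Q] [CompactSpace Q] (r : ℕ)
    (H : Q → AffineSubspace ℝ (EuclideanSpace ℝ (Fin r))) :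
    (∀ x, glaeserRef (fun y => (H y : Set (EuclideanSpace ℝ (Fin r)))) x ⊆ (H x : Set _)) ∧
    (∀ f : Q → EuclideanSpace ℝ (Fin r), Continuous f →
      ((∀ x, f x ∈ H x) ↔
        ∀ x, f x ∈ glaeserRef (fun y => (H y : Set (EuclideanSpace ℝ (Fin r)))) x)) := by
  refine ⟨fun x v hv => hv.1, fun f hf => ⟨fun hs x => ?_, fun hs x => (hs x).1⟩⟩
  refine ⟨hs x, ?_⟩
  have h1 : Tendsto (fun y => edist (f x) (f y)) (𝓝 x) (𝓝 0) := by
    have : Tendsto (fun y => edist (f x) (f y)) (𝓝 x) (𝓝 (edist (f x) (f x))) :=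
      (continuous_const.edist hf).tendsto x
    simpa using this
  refine tendsto_of_tendsto_of_tendsto_of_le_of_le tendsto_const_nhds h1
    (fun y => zero_le) (fun y => ?_)
  exact EMetric.infEdist_le_edist_of_mem (hs y)
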